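/- If V1 and V2 are maps X x R^n -> R^n each satisfying positive correlation (V(x,p) != 0 implies p'V(x,p) > 0) and Nash stationarity (V(x,p) = 0 iff x in argmax_{y in X} y'p), then for any positive constants a, b the conic combination aV1 + bV2 also satisfies positive correlation and Nash stationarity. -/
import Mathlib


open scoped BigOperators

/-- The probability simplex in `ℝ^n`. -/
def simplex (n : ℕ) : Set (Fin n → ℝ) := stdSimplex ℝ (Fin n)

/-- Dot product `p'x`. -/
def dot {n : ℕ} (p x : Fin n → ℝ) : ℝ := ∑ i, p i * x i

/-- Best response set `B(p) = argmax_{y ∈ X} y'p`. -/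
def BR {n : ℕ} (p : Fin n → ℝ) : Set (Fin n → ℝ) :=
  {x ∈ simplex n | ∀ y ∈ simplex n, dot y p ≤ dot x p}

/-- Positive correlation. -/
def PC {n : ℕ} (V : (Fin n → ℝ) → (Fin n → ℝ) → (Fin n → ℝ)) : Prop :=
  ∀ x ∈ simplex n, ∀ p : Fin n → ℝ, V x p ≠ 0 → 0 < dot p (V x p)

/-- Nash stationarity. -/
def NS {n : ℕ} (V : (Fin n → ℝ) → (Fin n → ℝ) → (Fin n → ℝ)) : Prop :=
  ∀ x ∈ simplex n, ∀ p : Fin n → ℝ, (V x p = 0 ↔ x ∈ BR p)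

theorem stmt_6 {n : ℕ}
    (V₁ V₂ : (Fin n → ℝ) → (Fin n → ℝ) → (Fin n → ℝ))
    (h₁PC : PC V₁) (h₁NS : NS V₁) (h₂PC : PC V₂) (h₂NS : NS V₂)
    (a b : ℝ) (ha : 0 < a) (hb : 0 < b) :
    PC (fun x p => a • V₁ x p + b • V₂ x p) ∧
      NS (fun x p => a • V₁ x p + b • V₂ x p) := by
  have hdot : ∀ (p u v : Fin n → ℝ), dot p (a • u + b • v) = a * dot p u + b * dot p v := by
    intro p u v
    simp only [dot, Pi.add_apply, Pi.smul_apply, smul_eq_mul, mul_add,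
      Finset.sum_add_distrib, Finset.mul_sum]
    congr 1 <;> exact Finset.sum_congr rfl fun i _ => by ring
  constructor
  · intro x hx p hne
    have key : V₁ x p ≠ 0 ∨ V₂ x p ≠ 0 := by
      by_contra h
      push_neg at h
      apply hne
      simp [h.1, h.2]
    have hiff : V₁ x p = 0 ↔ V₂ x p = 0 := (h₁NS x hx p).trans (h₂NS x hx p).symm
    have h1 : V₁ x p ≠ 0 := by
      rcases key with h | h
      · exact h
      · exact fun h0 => h (hiff.mp h0)
    have h2 : V₂ x p ≠ 0 := fun h0 => h1 (hiff.mpr h0)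
    have := h₁PC x hx p h1
    have := h₂PC x hx p h2
    rw [hdot]
    positivity
  · intro x hx p
    constructor
    · intro h0
      by_contra hBR
      have h1 : V₁ x p ≠ 0 := fun h => hBR ((h₁NS x hx p).mp h)
      have h2 : V₂ x p ≠ 0 := fun h => hBR ((h₂NS x hx p).mp h)
      have hp : 0 < dot p (a • V₁ x p + b • V₂ x p) := by
        rw [hdot]
        have := h₁PC x hx p h1
        have := h₂PC x hx p h2
        positivity
      rw [show a • V₁ x p + b • V₂ x p = 0 from h0] at hp
      simp [dot] at hp
    · intro hBR
      have h1 := (h₁NS x hx p).mpr hBR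
      have h2 := (h₂NS x hx p).mpr hBR
      simp [h1, h2]
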